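/- The subgroup π(C_{G'}(s')) is a normal subgroup of C_G(s), and the quotient group C_G(s)/π(C_{G'}(s')) is isomorphic to a subgroup of ker π; in particular this quotient is abelian, and if ker π is finite then C_G(s)/π(C_{G'}(s')) is a finite abelian group whose order divides the order of ker π. -/
import Mathlib


/-- The subgroup `π(C_{G'}(s'))` is normal in `C_G(s)`, and the quotient
`C_G(s)/π(C_{G'}(s'))` is isomorphic to a subgroup of `ker π`; in particular this quotient is
abelian, and if `ker π` is finite then it is a finite abelian group whose order divides the
order of `ker π`. -/
theorem quotient_centralizer_embeds_in_ker
    {G' G : Type*} [Group G'] [Group G] (π : G' →* G)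
    (hsurj : Function.Surjective π) (hker : π.ker ≤ Subgroup.center G')
    (s : G) (s' : G') (hs' : π s' = s)
    (N : Subgroup ↥(Subgroup.centralizer {s}))
    (hN : N = ((Subgroup.centralizer {s'}).map π).subgroupOf (Subgroup.centralizer {s})) :
    N.Normal ∧
    ∀ (_inst : N.Normal),
      (∃ f : (↥(Subgroup.centralizer {s}) ⧸ N) →* ↥π.ker, Function.Injective f) ∧
      (∀ a b : ↥(Subgroup.centralizer {s}) ⧸ N, a * b = b * a) ∧
      (Finite ↥π.ker →
        (Finite (↥(Subgroup.centralizer {s}) ⧸ N) ∧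
          Nat.card (↥(Subgroup.centralizer {s}) ⧸ N) ∣ Nat.card ↥π.ker)) := by
  classical
  -- a section of π
  set σ : G → G' := Function.surjInv hsurj with hσdef
  have hσ : ∀ g : G, π (σ g) = g := fun g => Function.surjInv_eq hsurj g
  -- central elements of ker π commute with everything
  have hcen : ∀ z ∈ π.ker, ∀ w : G', z * w = w * z := by
    intro z hz w
    exact (Subgroup.mem_center_iff.mp (hker hz) w).symm
  -- the commutator map
  set c : G' → G' := fun x' => x' * s' * x'⁻¹ * s'⁻¹ with hc
  -- independence of the lift
  have hindep : ∀ x y : G', π x = π y → c x = c y := by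
    intro x y hxy
    have hz : x⁻¹ * y ∈ π.ker := by
      simp [MonoidHom.mem_ker, hxy]
    have hy : y = x * (x⁻¹ * y) := by group
    have hzs : (x⁻¹ * y) * s' = s' * (x⁻¹ * y) := hcen _ hz s'
    have : c y = x * ((x⁻¹ * y) * s') * (x⁻¹ * y)⁻¹ * x⁻¹ * s'⁻¹ := by
      simp only [hc]
      rw [hy]; group
    rw [this, hzs]
    simp only [hc]
    group
  -- membership of commutators in ker π
  have hmem : ∀ x : Subgroup.centralizer ({s} : Set G), c (σ x.val) ∈ π.ker := by
    intro x
    have hx : s * x.val = x.val * s :=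
      Subgroup.mem_centralizer_iff.mp x.2 s rfl
    simp only [MonoidHom.mem_ker, hc, map_mul, map_inv, hσ, hs']
    rw [← hx]
    group
  -- multiplicativity of c on products when using lifts
  have hmul : ∀ a b : G', b * s' * b⁻¹ * s'⁻¹ ∈ π.ker → c (a * b) = c a * c b := by
    intro a b hb
    set k : G' := b * s' * b⁻¹ * s'⁻¹ with hk
    have h1 : b * s' = k * (s' * b) := by rw [hk]; group
    have hkc : ∀ w : G', k * w = w * k := fun w => hcen k hb w
    calc c (a * b) = a * (b * s') * b⁻¹ * a⁻¹ * s'⁻¹ := by simp only [hc]; group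
      _ = a * (k * (s' * b)) * b⁻¹ * a⁻¹ * s'⁻¹ := by rw [h1]
      _ = (a * k) * (s' * a⁻¹ * s'⁻¹) := by group
      _ = (k * a) * (s' * a⁻¹ * s'⁻¹) := by rw [hkc a]
      _ = k * (a * s' * a⁻¹ * s'⁻¹) := by group
      _ = (a * s' * a⁻¹ * s'⁻¹) * k := hkc _
      _ = c a * c b := by rw [hc]
  -- the homomorphism F : C_G(s) →* ker π
  set F : ↥(Subgroup.centralizer ({s} : Set G)) →* ↥π.ker :=
    { toFun := fun x => ⟨c (σ x.val), hmem x⟩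
      map_one' := by
        have h1 : c (σ (1 : G)) = c (1 : G') := hindep _ _ (by simp [hσ])
        have h2 : c (1 : G') = 1 := by simp [hc]
        ext
        simp [h1, h2]
      map_mul' := by
        intro x y
        have h1 : c (σ (x.val * y.val)) = c (σ x.val * σ y.val) :=
          hindep _ _ (by simp [map_mul, hσ])
        have h2 : c (σ x.val * σ y.val) = c (σ x.val) * c (σ y.val) := by
          have := hmem y
          rw [hc] at this
          exact hmul _ _ this
        ext
        simp only [Subgroup.coe_mul, Submonoid.mk_mul_mk]
        rw [h1, h2] } with hF
  -- the kernel of F is N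
  have hkerF : F.ker = N := by
    rw [hN]
    ext x
    constructor
    · intro hx
      have hx' : c (σ x.val) = 1 := by
        have := hx
        simp only [MonoidHom.mem_ker, hF, MonoidHom.coe_mk, OneHom.coe_mk,
          Subtype.ext_iff] at this
        exact this
      refine Subgroup.mem_subgroupOf.mpr ?_
      refine Subgroup.mem_map.mpr ⟨σ x.val, ?_, hσ x.val⟩
      refine Subgroup.mem_centralizer_iff.mpr ?_
      intro g hg
      rcases hg with rfl
      have : σ x.val * g * (σ x.val)⁻¹ * g⁻¹ = 1 := hx'
      have h2 : σ x.val * g = g * σ x.val := by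
        have h3 : σ x.val * g * (σ x.val)⁻¹ * g⁻¹ * (g * σ x.val) = 1 * (g * σ x.val) := by
          rw [this]
        rw [one_mul] at h3
        rw [← h3]; group
      exact h2.symm
    · intro hx
      rcases Subgroup.mem_map.mp (Subgroup.mem_subgroupOf.mp hx) with ⟨y, hy, hyx⟩
      have hcy : c y = 1 := by
        have h1 : s' * y = y * s' := Subgroup.mem_centralizer_iff.mp hy s' rfl
        show y * s' * y⁻¹ * s'⁻¹ = 1
        rw [← h1]; group
      have : c (σ x.val) = c y := hindep _ _ (by rw [hσ, hyx])
      simp only [MonoidHom.mem_ker, hF, MonoidHom.coe_mk, OneHom.coe_mk, Subtype.ext_iff]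
      rw [this, hcy]
      rfl
  subst hkerF
  have hNormal : F.ker.Normal := MonoidHom.normal_ker F
  refine ⟨hNormal, fun _inst => ?_⟩
  -- elements of ker π commute
  have hcomm : ∀ u v : ↥π.ker, u * v = v * u := by
    intro u v
    ext
    exact hcen u.val u.2 v.val
  refine ⟨⟨QuotientGroup.kerLift F, QuotientGroup.kerLift_injective F⟩, ?_, ?_⟩
  · intro a b
    apply QuotientGroup.kerLift_injective F
    rw [map_mul, map_mul, hcomm]
  · intro hfin
    have hFin : Finite (↥(Subgroup.centralizer ({s} : Set G)) ⧸ F.ker) :=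
      Finite.of_injective _ (QuotientGroup.kerLift_injective F)
    exact ⟨hFin, Subgroup.card_dvd_of_injective _ (QuotientGroup.kerLift_injective F)⟩
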